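/- Assume hypothesis (H1) holds and p⁻ > q⁺ + 1. Then for every λ > 0 the functional J_λ is coercive, i.e. J_λ(u) → +∞ as ‖u‖ → ∞. -/

import Mathlib

/-- The norm ‖u‖ = (Σ_{k=1}^{T+1} |Δu(k−1)|²)^{1/2} on H. -/
noncomputable def normH (T : ℕ) (u : ℕ → ℝ) : ℝ :=
  Real.sqrt (∑ k ∈ Finset.Icc 1 (T + 1), |u k - u (k - 1)| ^ 2)

/-- F(k,t) = ∫₀ᵗ f(k,τ) dτ. -/
noncomputable def Fint (f : ℕ → ℝ → ℝ) (k : ℕ) (t : ℝ) : ℝ :=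
  ∫ τ in (0:ℝ)..t, f k τ

/-- The functional J_λ(u) = Σ_{k=1}^{T+1} (1/p(k−1))|Δu(k−1)|^{p(k−1)} − λ Σ_{k=1}^{T} F(k,u(k)). -/
noncomputable def Jlam (T : ℕ) (p : ℕ → ℝ) (f : ℕ → ℝ → ℝ) (lam : ℝ) (u : ℕ → ℝ) : ℝ :=
  (∑ k ∈ Finset.Icc 1 (T + 1), (1 / p (k - 1)) * |u k - u (k - 1)| ^ p (k - 1))
    - lam * ∑ k ∈ Finset.Icc 1 T, Fint f k (u k)

set_option maxHeartbeats 1600000 in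
theorem stmt4 (T : ℕ) (hT : 1 ≤ T) (p : ℕ → ℝ) (hp : ∀ k ≤ T + 1, 1 < p k)
    (q : ℕ → ℝ) (hq : ∀ k, 1 ≤ k → k ≤ T → 0 < q k)
    (pm : ℝ) (hpm : IsLeast (p '' Set.Icc 0 (T + 1)) pm)
    (qp : ℝ) (hqp : IsGreatest (q '' Set.Icc 1 T) qp)
    (f : ℕ → ℝ → ℝ) (hf : ∀ k, 1 ≤ k → k ≤ T → Continuous (f k))
    -- Hypothesis (H1)
    (a b : ℕ → ℝ) (ha : ∀ k, 1 ≤ k → k ≤ T → 0 < a k)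
    (hH1 : ∀ k, 1 ≤ k → k ≤ T → ∀ t : ℝ, |f k t| ≤ a k * |t| ^ q k + b k)
    (hpq : qp + 1 < pm) :
    ∀ lam : ℝ, 0 < lam →
      ∀ M : ℝ, ∃ R : ℝ, ∀ u : ℕ → ℝ, u 0 = 0 → u (T + 1) = 0 →
        R < normH T u → M ≤ Jlam T p f lam u := by
  intro lam hlam M
  -- basic facts about pm, qp
  have hpm1 : 1 < pm := by
    obtain ⟨j, hj, rfl⟩ := hpm.1
    exact hp j hj.2
  have hqp0 : 0 < qp := by
    obtain ⟨j, hj, rfl⟩ := hqp.1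
    exact hq j hj.1 hj.2
  set s : ℝ := qp + 1 with hs_def
  have hs1 : 1 < s := by linarith
  have hspm : s < pm := hpq
  -- upper bound P for p
  set P : ℝ := (Finset.Icc 0 (T + 1)).sup' ⟨0, by simp⟩ p with hP_def
  have hPle : ∀ j ≤ T + 1, p j ≤ P := fun j hj =>
    Finset.le_sup' p (by simp [Finset.mem_Icc, hj])
  have hP1 : 1 < P := lt_of_lt_of_le (hp 0 (by omega)) (hPle 0 (by omega))
  have hP0 : 0 < P := by linarith
  -- constants
  set A : ℝ := ∑ k ∈ Finset.Icc 1 T, a k with hA_def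
  set B : ℝ := ∑ k ∈ Finset.Icc 1 T, (a k + |b k|) with hB_def
  have hA0 : 0 ≤ A := Finset.sum_nonneg fun k hk => by
    rw [Finset.mem_Icc] at hk; exact (ha k hk.1 hk.2).le
  have hB0 : 0 ≤ B := Finset.sum_nonneg fun k hk => by
    rw [Finset.mem_Icc] at hk
    have := ha k hk.1 hk.2
    have := abs_nonneg (b k)
    linarith
  have hT1pos : (0:ℝ) < (T:ℝ) + 1 := by positivity
  set c1 : ℝ := (1 / P) * ((Real.sqrt ((T:ℝ) + 1)) ^ pm)⁻¹ with hc1_def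
  have hc1 : 0 < c1 := by
    have h1 : (0:ℝ) < Real.sqrt ((T:ℝ)+1) := Real.sqrt_pos.mpr (by positivity)
    have := Real.rpow_pos_of_pos h1 pm
    positivity
  set c2 : ℝ := lam * A * ((T:ℝ) + 1) ^ s with hc2_def
  set c3 : ℝ := lam * B * ((T:ℝ) + 1) with hc3_def
  set c4 : ℝ := 1 / P with hc4_def
  have hc2 : 0 ≤ c2 := by
    have := Real.rpow_nonneg hT1pos.le s
    positivity
  have hc3 : 0 ≤ c3 := by positivity
  set C : ℝ := c2 + c3 with hC_def
  have hC0 : 0 ≤ C := by linarith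
  set K : ℝ := max (M + c4) 0 with hK_def
  have hK0 : 0 ≤ K := le_max_right _ _
  clear_value P A B c1 c2 c3 c4 C K
  refine ⟨max 1 (((C + K) / c1) ^ (1 / (pm - s))), ?_⟩
  intro u hu0 huT hR
  set N : ℝ := normH T u with hN_def
  have hNnn : 0 ≤ N := Real.sqrt_nonneg _
  have hN1 : 1 ≤ N := le_of_lt (lt_of_le_of_lt (le_max_left _ _) hR)
  have hN0 : 0 < N := by linarith
  -- sum of squares equals N^2
  have hsum2 : ∑ k ∈ Finset.Icc 1 (T + 1), |u k - u (k - 1)| ^ 2 = N ^ 2 := by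
    rw [hN_def]
    simp only [normH]
    rw [Real.sq_sqrt (Finset.sum_nonneg fun k _ => by positivity)]
  clear_value N
  -- each increment is at most N
  have hstep : ∀ k, 1 ≤ k → k ≤ T + 1 → |u k - u (k - 1)| ≤ N := by
    intro k hk1 hk2
    have hmem : k ∈ Finset.Icc 1 (T + 1) := Finset.mem_Icc.mpr ⟨hk1, hk2⟩
    have h1 : |u k - u (k - 1)| ^ 2 ≤ N ^ 2 := by
      rw [← hsum2]
      exact Finset.single_le_sum (f := fun k => |u k - u (k-1)| ^ 2)
        (fun i _ => by positivity) hmem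
    exact le_of_pow_le_pow_left₀ (by norm_num) hNnn h1
  -- |u k| ≤ (T+1) * N
  have huk : ∀ k, k ≤ T + 1 → |u k| ≤ ((T:ℝ) + 1) * N := by
    have key : ∀ k, k ≤ T + 1 → |u k| ≤ (k : ℝ) * N := by
      intro k
      induction k with
      | zero => intro _; simp [hu0]
      | succ n ih =>
        intro hn
        have h1 : |u n| ≤ (n : ℝ) * N := ih (by omega)
        have h2 : |u (n + 1) - u n| ≤ N := by
          have := hstep (n + 1) (by omega) hn
          simpa using this
        calc |u (n+1)| = |u n + (u (n+1) - u n)| := by ring_nf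
          _ ≤ |u n| + |u (n+1) - u n| := abs_add_le _ _
          _ ≤ (n : ℝ) * N + N := add_le_add h1 h2
          _ = ((n:ℝ) + 1) * N := by ring
          _ = ((n + 1 : ℕ) : ℝ) * N := by push_cast; ring
    intro k hk
    refine (key k hk).trans ?_
    have hkT : (k : ℝ) ≤ (T : ℝ) + 1 := by exact_mod_cast hk
    exact mul_le_mul_of_nonneg_right hkT hNnn
  -- lower bound for the first sum
  have hS1 : c1 * N ^ pm - c4 ≤
      ∑ k ∈ Finset.Icc 1 (T + 1), (1 / p (k - 1)) * |u k - u (k - 1)| ^ p (k - 1) := by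
    -- find an index with big increment
    have hcard : (Finset.Icc 1 (T + 1)).card = T + 1 := by
      simp [Nat.card_Icc]
    obtain ⟨k₀, hk₀mem, hk₀⟩ : ∃ k₀ ∈ Finset.Icc 1 (T + 1),
        N ^ 2 / ((T:ℝ) + 1) ≤ |u k₀ - u (k₀ - 1)| ^ 2 := by
      apply Finset.exists_le_of_sum_le ⟨1, by simp⟩
      rw [hsum2, Finset.sum_const, hcard, nsmul_eq_mul]
      apply le_of_eq
      push_cast
      field_simp
    rw [Finset.mem_Icc] at hk₀mem
    set x : ℝ := |u k₀ - u (k₀ - 1)| with hx_def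
    have hxnn : 0 ≤ x := abs_nonneg _
    have hxge : N / Real.sqrt ((T:ℝ) + 1) ≤ x := by
      have hsq : (N / Real.sqrt ((T:ℝ)+1)) ^ 2 = N ^ 2 / ((T:ℝ)+1) := by
        rw [div_pow, Real.sq_sqrt hT1pos.le]
      have h2x : (N / Real.sqrt ((T:ℝ)+1)) ^ 2 ≤ x ^ 2 := by rw [hsq]; exact hk₀
      exact le_of_pow_le_pow_left₀ two_ne_zero hxnn h2x
    have hk₀T : k₀ - 1 ≤ T + 1 := by omega
    have hp₀ : 1 < p (k₀ - 1) := hp _ hk₀T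
    have hpm₀ : pm ≤ p (k₀ - 1) := hpm.2 ⟨k₀ - 1, Set.mem_Icc.mpr ⟨Nat.zero_le _, hk₀T⟩, rfl⟩
    -- single term bound
    have hterm : (1 / P) * (x ^ pm - 1) ≤ (1 / p (k₀ - 1)) * x ^ p (k₀ - 1) := by
      have h1 : x ^ pm - 1 ≤ x ^ p (k₀ - 1) := by
        rcases le_or_gt 1 x with hx1 | hx1
        · have := Real.rpow_le_rpow_of_exponent_le hx1 hpm₀
          linarith
        · have h2 : x ^ pm ≤ 1 := Real.rpow_le_one hxnn hx1.le (by linarith)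
          have h3 : 0 ≤ x ^ p (k₀ - 1) := Real.rpow_nonneg hxnn _
          linarith
      have h2 : (1 / P) ≤ 1 / p (k₀ - 1) :=
        one_div_le_one_div_of_le (by linarith) (hPle _ hk₀T)
      calc (1 / P) * (x ^ pm - 1) ≤ (1 / P) * x ^ p (k₀ - 1) := by
            apply mul_le_mul_of_nonneg_left h1 (by positivity)
        _ ≤ (1 / p (k₀ - 1)) * x ^ p (k₀ - 1) := by
            apply mul_le_mul_of_nonneg_right h2 (Real.rpow_nonneg hxnn _)
    -- sum ≥ single term
    have hsumge : (1 / p (k₀ - 1)) * x ^ p (k₀ - 1) ≤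
        ∑ k ∈ Finset.Icc 1 (T + 1), (1 / p (k - 1)) * |u k - u (k - 1)| ^ p (k - 1) := by
      apply Finset.single_le_sum (f := fun k => (1 / p (k - 1)) * |u k - u (k-1)| ^ p (k-1))
      · intro i hi
        rw [Finset.mem_Icc] at hi
        have hpi : 1 < p (i - 1) := hp _ (by omega)
        have := Real.rpow_nonneg (abs_nonneg (u i - u (i-1))) (p (i-1))
        positivity
      · exact Finset.mem_Icc.mpr hk₀mem
    -- combine
    have hxpm : (N / Real.sqrt ((T:ℝ)+1)) ^ pm ≤ x ^ pm :=
      Real.rpow_le_rpow (by positivity) hxge (by linarith)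
    have heq : (1 / P) * ((N / Real.sqrt ((T:ℝ)+1)) ^ pm - 1) = c1 * N ^ pm - c4 := by
      rw [Real.div_rpow hNnn (Real.sqrt_nonneg _), hc1_def, hc4_def]
      field_simp
    calc c1 * N ^ pm - c4 = (1 / P) * ((N / Real.sqrt ((T:ℝ)+1)) ^ pm - 1) := heq.symm
      _ ≤ (1 / P) * (x ^ pm - 1) := by
          apply mul_le_mul_of_nonneg_left (by linarith) (by positivity)
      _ ≤ (1 / p (k₀ - 1)) * x ^ p (k₀ - 1) := hterm
      _ ≤ _ := hsumge
  -- upper bound for the second sum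
  have hS2 : lam * ∑ k ∈ Finset.Icc 1 T, Fint f k (u k) ≤ c2 * N ^ s + c3 * N := by
    have hFk : ∀ k, 1 ≤ k → k ≤ T →
        Fint f k (u k) ≤ a k * (((T:ℝ)+1) * N) ^ s + (a k + |b k|) * (((T:ℝ)+1) * N) := by
      intro k hk1 hk2
      set t : ℝ := u k with ht_def
      clear_value t
      have htle : |t| ≤ ((T:ℝ)+1) * N := by rw [ht_def]; exact huk k (by omega)
      have hak := ha k hk1 hk2
      have hqk := hq k hk1 hk2
      have hqkqp : q k ≤ qp := hqp.2 ⟨k, Set.mem_Icc.mpr ⟨hk1, hk2⟩, rfl⟩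
      -- integral bound
      have hC' : ∀ x ∈ Set.uIoc (0:ℝ) t, ‖f k x‖ ≤ a k * |t| ^ q k + b k := by
        intro x hx
        rw [Real.norm_eq_abs]
        refine (hH1 k hk1 hk2 x).trans ?_
        have hxle : |x| ≤ |t| := by
          have h1 := le_abs_self t
          have h2 := neg_abs_le t
          rcases Set.mem_uIoc.mp hx with ⟨g1, g2⟩ | ⟨g1, g2⟩ <;>
            (rw [abs_le]; constructor <;> linarith)
        have hr := Real.rpow_le_rpow (abs_nonneg x) hxle hqk.le
        have := mul_le_mul_of_nonneg_left hr hak.le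
        linarith
      have hint : |Fint f k t| ≤ (a k * |t| ^ q k + b k) * |t| := by
        have h := intervalIntegral.norm_integral_le_of_norm_le_const hC'
        simpa [Fint, Real.norm_eq_abs] using h
      -- bound |t|^{q k} ≤ |t|^{qp} + 1
      have hbound : |t| ^ q k ≤ |t| ^ qp + 1 := by
        rcases le_or_gt 1 |t| with h | h
        · have := Real.rpow_le_rpow_of_exponent_le h hqkqp
          have := Real.rpow_nonneg (abs_nonneg t) qp
          linarith
        · have := Real.rpow_le_one (abs_nonneg t) h.le hqk.le
          have := Real.rpow_nonneg (abs_nonneg t) qp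
          linarith
      have hts : |t| ^ qp * |t| = |t| ^ s := by
        rw [hs_def, Real.rpow_add' (abs_nonneg t) (by linarith), Real.rpow_one]
      have htss : |t| ^ s ≤ (((T:ℝ)+1) * N) ^ s :=
        Real.rpow_le_rpow (abs_nonneg t) htle (by linarith)
      have hFle : Fint f k t ≤ a k * |t| ^ s + (a k + |b k|) * |t| := by
        have h1 : Fint f k t ≤ |Fint f k t| := le_abs_self _
        have h2 : (a k * |t| ^ q k + b k) * |t| ≤ a k * |t| ^ s + (a k + |b k|) * |t| := by
          have h3 : b k ≤ |b k| := le_abs_self _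
          have h4 : a k * |t| ^ q k * |t| ≤ a k * (|t| ^ qp + 1) * |t| :=
            mul_le_mul_of_nonneg_right
              (mul_le_mul_of_nonneg_left hbound hak.le) (abs_nonneg t)
          have h5 : a k * (|t| ^ qp + 1) * |t| = a k * (|t|^qp * |t|) + a k * |t| := by ring
          have h6 : b k * |t| ≤ |b k| * |t| :=
            mul_le_mul_of_nonneg_right h3 (abs_nonneg t)
          rw [← hts]
          have h7 : (a k * |t| ^ q k + b k) * |t| = a k * |t| ^ q k * |t| + b k * |t| := by
            ring
          linarith
        linarith
      refine hFle.trans ?_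
      have h6 : a k * |t| ^ s ≤ a k * (((T:ℝ)+1) * N) ^ s :=
        mul_le_mul_of_nonneg_left htss hak.le
      have h7 : (a k + |b k|) * |t| ≤ (a k + |b k|) * (((T:ℝ)+1) * N) := by
        have h8 : 0 ≤ a k + |b k| := by have := abs_nonneg (b k); linarith
        exact mul_le_mul_of_nonneg_left htle h8
      linarith
    have hsum : ∑ k ∈ Finset.Icc 1 T, Fint f k (u k) ≤
        A * (((T:ℝ)+1) * N) ^ s + B * (((T:ℝ)+1) * N) := by
      rw [hA_def, hB_def, Finset.sum_mul, Finset.sum_mul, ← Finset.sum_add_distrib]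
      apply Finset.sum_le_sum
      intro k hk
      rw [Finset.mem_Icc] at hk
      exact hFk k hk.1 hk.2
    have hexp : (((T:ℝ)+1) * N) ^ s = ((T:ℝ)+1) ^ s * N ^ s :=
      Real.mul_rpow hT1pos.le hNnn
    calc lam * ∑ k ∈ Finset.Icc 1 T, Fint f k (u k)
        ≤ lam * (A * (((T:ℝ)+1) * N) ^ s + B * (((T:ℝ)+1) * N)) := by
          apply mul_le_mul_of_nonneg_left hsum hlam.le
      _ = c2 * N ^ s + c3 * N := by
          rw [hexp, hc2_def, hc3_def]; ring
  -- combine: J ≥ c1 N^pm - c2 N^s - c3 N - c4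
  have hJ : c1 * N ^ pm - c2 * N ^ s - c3 * N - c4 ≤ Jlam T p f lam u := by
    unfold Jlam
    have := hS1
    have := hS2
    linarith
  -- final arithmetic
  have hRN : ((C + K) / c1) ^ (1 / (pm - s)) < N :=
    lt_of_le_of_lt (le_max_right _ _) hR
  have hdiff : (0:ℝ) < pm - s := by linarith
  have hNpms : C + K ≤ c1 * N ^ (pm - s) := by
    have hbase : 0 ≤ (C + K) / c1 := by positivity
    have h2 : (((C + K) / c1) ^ (1 / (pm - s))) ^ (pm - s) ≤ N ^ (pm - s) :=
      Real.rpow_le_rpow (Real.rpow_nonneg hbase _) hRN.le hdiff.le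
    rw [one_div, Real.rpow_inv_rpow hbase (ne_of_gt hdiff)] at h2
    calc C + K = c1 * ((C + K) / c1) := by field_simp
      _ ≤ c1 * N ^ (pm - s) := by apply mul_le_mul_of_nonneg_left h2 hc1.le
  have hNpm : N ^ pm = N ^ s * N ^ (pm - s) := by
    rw [← Real.rpow_add hN0]; ring_nf
  have hNs1 : 1 ≤ N ^ s := by
    have := Real.rpow_le_rpow_of_exponent_le hN1 (le_of_lt (by linarith : (0:ℝ) < s))
    simpa [Real.rpow_zero] using this
  have hNNs : N ≤ N ^ s := by
    have := Real.rpow_le_rpow_of_exponent_le hN1 hs1.le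
    simpa [Real.rpow_one] using this
  have hKM : M + c4 ≤ K := by rw [hK_def]; exact le_max_left _ _
  have hfin : M ≤ c1 * N ^ pm - c2 * N ^ s - c3 * N - c4 := by
    have hXnn : (0:ℝ) ≤ N ^ s := Real.rpow_nonneg hNnn s
    have h1 : N ^ s * (C + K) ≤ N ^ s * (c1 * N ^ (pm - s)) :=
      mul_le_mul_of_nonneg_left hNpms hXnn
    have h2 : c1 * N ^ pm = N ^ s * (c1 * N ^ (pm - s)) := by rw [hNpm]; ring
    have h3 : N ^ s * (C + K) = c2 * N ^ s + c3 * N ^ s + N ^ s * K := by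
      rw [hC_def]; ring
    have h4 : c3 * N ≤ c3 * N ^ s := mul_le_mul_of_nonneg_left hNNs hc3
    have h5 : K ≤ N ^ s * K := le_mul_of_one_le_left hK0 hNs1
    linarith
  linarith
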